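/- arXiv:1112.4741 — 4 statements merged into one kernel-verified Lean document; each statement's English description precedes it below -/
import Mathlib

section
/- If (a_0,...,a_n) is an ultra-logconcave sequence of nonnegative reals of order n, then the sequence (b_0,...,b_{n-1}) defined by b_i = (i+1)·a_{i+1} is ultra-logconcave of order n-1. -/
noncomputable def cin (n i : ℕ) : ℝ :=
  ((i : ℝ)/((i : ℝ)+1)) * (((n : ℝ)-(i : ℝ))/((n : ℝ)-(i : ℝ)+1))

def UltraLogConcave (n : ℕ) (a : ℕ → ℝ) : Prop :=
  ∀ i, 1 ≤ i → i ≤ n - 1 → cin n i * (a i)^2 ≥ a (i-1) * a (i+1)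

theorem derivative_ULC (n : ℕ) (hn : 1 ≤ n) (a : ℕ → ℝ)
    (ha : ∀ i ≤ n, 0 ≤ a i) (hULC : UltraLogConcave n a) :
    UltraLogConcave (n-1) (fun i => ((i : ℝ)+1) * a (i+1)) := by
  intro i h1 h2
  -- From 1 ≤ i ≤ (n-1)-1 we get i + 2 ≤ n
  have hin : i + 2 ≤ n := by omega
  have hkey := hULC (i+1) (by omega) (by omega)
  have hi1 : ((i:ℝ) - 1 + 1) = (i:ℝ) := by ring
  have hie : ((i - 1 : ℕ) : ℝ) = (i:ℝ) - 1 := by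
    have : (1:ℕ) ≤ i := h1
    push_cast [Nat.cast_sub this]; ring
  have hne : ((n:ℝ) - (i:ℝ)) ≠ 0 := by
    have : (i:ℝ) + 2 ≤ (n:ℝ) := by exact_mod_cast hin
    nlinarith
  have hconst : cin (n-1) i * ((i:ℝ)+1)^2 = (i:ℝ) * ((i:ℝ)+2) * cin n (i+1) := by
    unfold cin
    have hn1 : ((n - 1 : ℕ) : ℝ) = (n:ℝ) - 1 := by
      push_cast [Nat.cast_sub hn]; ring
    rw [hn1]
    push_cast
    have h1' : ((i:ℝ) + 1) ≠ 0 := by positivity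
    have h2' : ((i:ℝ) + 2) ≠ 0 := by positivity
    have h3' : ((n:ℝ) - 1 - (i:ℝ) + 1) ≠ 0 := by
      intro h; apply hne; linarith
    have h4' : ((n:ℝ) - ((i:ℝ)+1) + 1) ≠ 0 := by
      intro h; apply hne; linarith
    field_simp
    ring
  have hidx : i - 1 + 1 = i := by omega
  simp only [hidx]
  rw [ge_iff_le, hie, hi1]
  push_cast
  have ha1 : 0 ≤ a (i+1) := ha (i+1) (by omega)
  have hii : (0:ℝ) ≤ (i:ℝ) * ((i:ℝ)+2) := by positivity
  calc (i:ℝ) * a i * (((i:ℝ)+1+1) * a (i+1+1))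
      = (i:ℝ) * ((i:ℝ)+2) * (a (i+1-1) * a (i+1+1)) := by
        have : i + 1 - 1 = i := by omega
        rw [this]; ring
    _ ≤ (i:ℝ) * ((i:ℝ)+2) * (cin n (i+1) * (a (i+1))^2) := by
        exact mul_le_mul_of_nonneg_left hkey hii
    _ = cin (n-1) i * (((i:ℝ)+1) * a (i+1))^2 := by
        rw [mul_pow]; nlinarith [hconst]
end

section
/- If (a_0,...,a_n) is an ultra-logconcave sequence of nonnegative reals of order n, then the sequence (b_0,...,b_{n+1}) defined by b_0 = 0 and b_i = a_{i-1}/i for 1 ≤ i ≤ n+1 is ultra-logconcave of order n+1. -/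
theorem antiderivative_ULC (n : ℕ) (a : ℕ → ℝ)
    (ha : ∀ i ≤ n, 0 ≤ a i) (hULC : UltraLogConcave n a) :
    UltraLogConcave (n+1) (fun i => if i = 0 then 0 else a (i-1) / (i : ℝ)) := by
  intro i hi1 hin
  simp only [Nat.add_sub_cancel] at hin
  by_cases h1 : i = 1
  · subst h1
    simp only [if_pos rfl]
    norm_num
    have h0 : (0:ℝ) ≤ a 0 := ha 0 (by omega)
    have : (0:ℝ) ≤ cin (n+1) 1 := by
      unfold cin
      push_cast
      rw [show ((n:ℝ)+1-1) = (n:ℝ) by ring]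
      have hn : (0:ℝ) ≤ (n:ℝ) := Nat.cast_nonneg n
      positivity
    nlinarith [sq_nonneg (a 0)]
  · have hi2 : 2 ≤ i := by omega
    have hn2 : 2 ≤ n := le_trans hi2 hin
    have key := hULC (i-1) (by omega) (by omega)
    simp only [if_neg (show i ≠ 0 by omega), if_neg (show i - 1 ≠ 0 by omega),
      if_neg (show i + 1 ≠ 0 by omega)]
    have hc1 : ((i - 1 : ℕ) : ℝ) = (i:ℝ) - 1 := by
      have := Nat.cast_sub (show 1 ≤ i by omega) (R := ℝ); push_cast at this ⊢; linarith
    have hc2 : i - 1 - 1 = i - 2 := by omega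
    have hc3 : i - 1 + 1 = i := by omega
    have hxi : (2:ℝ) ≤ (i:ℝ) := by exact_mod_cast hi2
    have hmi : (i:ℝ) ≤ (n:ℝ) := by exact_mod_cast hin
    unfold cin at key ⊢
    rw [hc1, hc2, hc3] at key
    push_cast
    rw [hc1, hc2]
    set x := (i:ℝ) with hx
    set m := (n:ℝ) with hm
    have h1p : (0:ℝ) < x - 1 := by linarith
    have h2p : (0:ℝ) < x + 1 := by linarith
    have h3p : (0:ℝ) < m - (x - 1) + 1 := by linarith
    have h4p : (0:ℝ) < m + 1 - x + 1 := by linarith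
    have h5p : (0:ℝ) < x := by linarith
    rw [show x - 1 + 1 = x by ring] at key
    rw [ge_iff_le, div_mul_div_comm, div_le_iff₀ (by positivity)]
    have hexp : x / (x + 1) * ((m + 1 - x) / (m + 1 - x + 1)) * (a (i-1) / x) ^ 2 *
        ((x - 1) * (x + 1)) =
        ((x - 1) / x * ((m - (x - 1)) / (m - (x - 1) + 1)) * a (i-1) ^ 2) := by
      rw [show m + 1 - x + 1 = m - (x - 1) + 1 by ring, show m + 1 - x = m - (x-1) + 1 - 1 by ring]
      field_simp
      ring
    rw [hexp]
    linarith
end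

section
/- (Newton's inequalities) Let γ_1,...,γ_n be nonnegative real numbers and let e_i = e_i(γ_1,...,γ_n) denote the i-th elementary symmetric polynomial. Then for all 1 ≤ i ≤ n-1, (e_i/C(n,i))² ≥ (e_{i-1}/C(n,i-1))·(e_{i+1}/C(n,i+1)). Equivalently, the sequence (e_0, e_1, ..., e_n) is ultra-logconcave of order n. -/
lemma esymm_nonneg (s : Multiset ℝ) (hs : ∀ x ∈ s, 0 ≤ x) (k : ℕ) : 0 ≤ s.esymm k := by
  unfold Multiset.esymm
  apply Multiset.sum_nonneg
  intro x hx
  simp only [Multiset.mem_map] at hx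
  obtain ⟨P, hP, rfl⟩ := hx
  exact Multiset.prod_nonneg fun a ha => hs a (Multiset.mem_of_le (Multiset.mem_powersetCard.1 hP).1 ha)

lemma esymm_eq_zero_of_lt (s : Multiset ℝ) (k : ℕ) (h : s.card < k) : s.esymm k = 0 := by
  unfold Multiset.esymm
  rw [Multiset.powersetCard_eq_empty _ h]
  simp

lemma esymm_cons (a : ℝ) (s : Multiset ℝ) (k : ℕ) :
    (a ::ₘ s).esymm (k+1) = s.esymm (k+1) + a * s.esymm k := by
  unfold Multiset.esymm
  rw [Multiset.powersetCard_cons, Multiset.map_add, Multiset.sum_add, Multiset.map_map]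
  congr 1
  simp only [Function.comp_def, Multiset.prod_cons]
  rw [← Multiset.sum_map_mul_left]

lemma esymm_zero_succ (s : Multiset ℝ) (hs : ∀ x ∈ s, 0 ≤ x) (k : ℕ)
    (h : s.esymm k = 0) : s.esymm (k+1) = 0 := by
  have hall : ∀ P ∈ Multiset.powersetCard k s, Multiset.prod P = 0 := by
    intro P hP
    have hnn : ∀ x ∈ Multiset.map Multiset.prod (Multiset.powersetCard k s), 0 ≤ x := by
      intro x hx
      simp only [Multiset.mem_map] at hx
      obtain ⟨Q, hQ, rfl⟩ := hx
      exact Multiset.prod_nonneg fun a ha => hs a (Multiset.mem_of_le (Multiset.mem_powersetCard.1 hQ).1 ha)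
    have hmem : Multiset.prod P ∈ Multiset.map Multiset.prod (Multiset.powersetCard k s) :=
      Multiset.mem_map_of_mem _ hP
    have hle := Multiset.single_le_sum hnn _ hmem
    have := hnn _ hmem
    unfold Multiset.esymm at h
    linarith [h ▸ hle]
  unfold Multiset.esymm
  apply Multiset.sum_eq_zero
  intro x hx
  simp only [Multiset.mem_map] at hx
  obtain ⟨P, hP, rfl⟩ := hx
  obtain ⟨hPle, hPcard⟩ := Multiset.mem_powersetCard.1 hP
  have hne : P ≠ 0 := by
    intro h0; rw [h0] at hPcard; simp at hPcard
  obtain ⟨x, hx⟩ := Multiset.exists_mem_of_ne_zero hne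
  have herase : P.erase x ∈ Multiset.powersetCard k s := by
    rw [Multiset.mem_powersetCard]
    exact ⟨le_trans (Multiset.erase_le x P) hPle,
      by rw [Multiset.card_erase_of_mem hx, hPcard]; rfl⟩
  have := hall _ herase
  rw [← Multiset.cons_erase hx, Multiset.prod_cons, this, mul_zero]

lemma quad_key (ν κ t a b c d : ℝ) (ht : 0 ≤ t)
    (hκ : 1 ≤ κ) (hκν : κ + 1 ≤ ν) (h1 : a*c ≤ b^2) (h2 : b*d ≤ c^2)
    (h3 : a*d ≤ b*c) :
    ((ν-κ+1)*b + (κ-1)*t*a) * ((ν-κ-1)*d + (κ+1)*t*c) ≤ ((ν-κ)*c + κ*t*b)^2 := by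
  have e1 : 0 ≤ (κ^2-1)*(b^2-a*c)*t^2 :=
    mul_nonneg (mul_nonneg (by nlinarith) (by linarith)) (sq_nonneg t)
  have e2 : 0 ≤ (κ-1)*(ν-κ-1)*((b*c-a*d)*t) :=
    mul_nonneg (mul_nonneg (by linarith) (by linarith)) (mul_nonneg (by linarith) ht)
  have e3 : 0 ≤ ((ν-κ)^2-1)*(c^2-b*d) :=
    mul_nonneg (by nlinarith) (by linarith)
  nlinarith [sq_nonneg (b*t - c), e1, e2, e3]

lemma newton_multiset (s : Multiset ℝ) : (∀ x ∈ s, 0 ≤ x) → ∀ i, 1 ≤ i → i + 1 ≤ s.card →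
    s.esymm (i-1) / (s.card.choose (i-1) : ℝ) * (s.esymm (i+1) / (s.card.choose (i+1) : ℝ))
      ≤ (s.esymm i / (s.card.choose i : ℝ))^2 := by
  induction s using Multiset.induction_on with
  | empty => intro _ i h1 h2; simp at h2
  | cons t s IH =>
    intro hs i hi1 hi2
    have ht : 0 ≤ t := hs t (Multiset.mem_cons_self t s)
    have hs' : ∀ x ∈ s, 0 ≤ x := fun x hx => hs x (Multiset.mem_cons_of_mem hx)
    set m := Multiset.card s with hm
    have hcard : Multiset.card (t ::ₘ s) = m + 1 := Multiset.card_cons t s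
    rw [hcard] at hi2 ⊢
    have him : i ≤ m := by omega
    set n := m + 1 with hn
    -- normalized tail quantities
    set q : ℕ → ℝ := fun j => s.esymm j / (m.choose j : ℝ) with hq
    have hq0 : q 0 = 1 := by simp [hq, Multiset.esymm, Multiset.powersetCard_zero_left]
    have hqnn : ∀ j, 0 ≤ q j := fun j =>
      div_nonneg (esymm_nonneg s hs' j) (Nat.cast_nonneg _)
    have hmul : ∀ j, s.esymm j = (m.choose j : ℝ) * q j := by
      intro j
      by_cases hj : j ≤ m
      · have : (m.choose j : ℝ) ≠ 0 := Nat.cast_ne_zero.2 (Nat.choose_pos hj).ne'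
        simp only [hq]
        field_simp
      · rw [esymm_eq_zero_of_lt s j (by omega), Nat.choose_eq_zero_of_lt (by omega)]
        simp
    have hqzero : ∀ j, m < j → q j = 0 := by
      intro j hj
      simp only [hq]
      rw [esymm_eq_zero_of_lt s j hj, zero_div]
    have hIH : ∀ j, 1 ≤ j → j + 1 ≤ m → q (j-1) * q (j+1) ≤ (q j)^2 := by
      intro j h1 h2
      have := IH hs' j h1 h2
      simpa [hq] using this
    clear_value q
    -- recursion formula
    have hnR : (0:ℝ) < (n:ℝ) := by positivity
    have hp : ∀ j, j ≤ n → (t ::ₘ s).esymm j / (n.choose j : ℝ) =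
        (((n:ℝ) - j) * q j + (j:ℝ) * t * q (j-1)) / n := by
      intro j hj
      match j with
      | 0 => simp [Multiset.esymm, Multiset.powersetCard_zero_left, hq0]
      | (k+1) =>
        rw [hn] at hj ⊢
        have hCpos : (0:ℝ) < ((m+1).choose (k+1) : ℝ) := by
          exact_mod_cast Nat.choose_pos hj
        rw [esymm_cons, hmul (k+1), hmul k, div_eq_div_iff (ne_of_gt hCpos) (ne_of_gt hnR)]
        have id1 : ((m.choose (k+1) : ℕ) : ℝ) * ((m:ℝ)+1) = (((m+1).choose (k+1) : ℕ) : ℝ) * (((m:ℝ)+1) - ((k:ℝ)+1)) := by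
          have h := Nat.choose_mul_succ_eq m (k+1)
          have hsub : ((m + 1 - (k+1) : ℕ) : ℝ) = ((m:ℝ)+1) - ((k:ℝ)+1) := by
            rw [Nat.cast_sub hj]; push_cast; ring
          calc ((m.choose (k+1) : ℕ) : ℝ) * ((m:ℝ)+1) = ((m.choose (k+1) * (m+1) : ℕ) : ℝ) := by push_cast; ring
            _ = (((m+1).choose (k+1) * (m+1-(k+1)) : ℕ) : ℝ) := by rw [h]
            _ = (((m+1).choose (k+1) : ℕ) : ℝ) * (((m:ℝ)+1) - ((k:ℝ)+1)) := by
                rw [Nat.cast_mul, hsub]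
        have id2 : ((m.choose k : ℕ) : ℝ) * ((m:ℝ)+1) = (((m+1).choose (k+1) : ℕ) : ℝ) * ((k:ℝ)+1) := by
          have h := Nat.add_one_mul_choose_eq m k
          calc ((m.choose k : ℕ) : ℝ) * ((m:ℝ)+1) = ((Nat.succ m * m.choose k : ℕ) : ℝ) := by push_cast; ring
            _ = (((Nat.succ m).choose (Nat.succ k) * Nat.succ k : ℕ) : ℝ) := by rw [h]
            _ = (((m+1).choose (k+1) : ℕ) : ℝ) * ((k:ℝ)+1) := by push_cast; ring
        have ei : k + 1 - 1 = k := by omega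
        rw [ei]
        push_cast
        have hnm : (n:ℝ) = (m:ℝ) + 1 := by exact_mod_cast hn
        linear_combination (q (k+1)) * id1 + (t * q k) * id2 + ((m.choose (k+1) : ℝ) * q (k+1) + t * (m.choose k : ℝ) * q k) * hnm
    -- set up quantities
    set b := q (i-1) with hb
    set c := q i with hc
    set d := q (i+1) with hd
    set A : ℝ := if 2 ≤ i then q (i-2) else 0 with hA
    have hiR : (1:ℝ) ≤ (i:ℝ) := by exact_mod_cast hi1
    have hiRn : (i:ℝ) + 1 ≤ (n:ℝ) := by exact_mod_cast hi2
    -- the three formulas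
    have hp2 : (t ::ₘ s).esymm i / (n.choose i : ℝ) =
        (((n:ℝ) - i) * c + (i:ℝ) * t * b)/n := hp i (by omega)
    have hp3 : (t ::ₘ s).esymm (i+1) / (n.choose (i+1) : ℝ) =
        (((n:ℝ) - i - 1) * d + ((i:ℝ)+1) * t * c)/n := by
      rw [hp (i+1) (by omega)]
      have ei : i + 1 - 1 = i := by omega
      rw [ei, ← hc, ← hd]
      push_cast
      ring_nf
    have hp1 : (t ::ₘ s).esymm (i-1) / (n.choose (i-1) : ℝ) =
        (((n:ℝ) - i + 1) * b + ((i:ℝ)-1) * t * A)/n := by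
      rw [hp (i-1) (by omega)]
      have hcast : ((i-1:ℕ):ℝ) = (i:ℝ) - 1 := by
        rw [Nat.cast_sub hi1]; push_cast; ring
      rw [hcast]
      by_cases h2i : 2 ≤ i
      · have : i - 1 - 1 = i - 2 := by omega
        rw [this, hA, if_pos h2i, hb]
        ring_nf
      · have : i = 1 := by omega
        subst this
        rw [hA, hb]
        norm_num
    rw [hp1, hp2, hp3]
    -- inequalities among q's
    have h1 : A * c ≤ b^2 := by
      by_cases h2i : 2 ≤ i
      · rw [hA, if_pos h2i]
        have := hIH (i-1) (by omega) (by omega)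
        have e1 : i - 1 - 1 = i - 2 := by omega
        have e2 : i - 1 + 1 = i := by omega
        rw [e1, e2] at this
        exact this
      · rw [hA, if_neg h2i]
        simpa using sq_nonneg b
    have h2 : b * d ≤ c^2 := by
      by_cases hlt : i + 1 ≤ m
      · exact hIH i hi1 hlt
      · have : d = 0 := by
          rw [hd]; exact hqzero (i+1) (by omega)
        rw [this, mul_zero]
        exact sq_nonneg c
    have h3 : A * d ≤ b * c := by
      by_cases h2i : 2 ≤ i
      swap
      · rw [hA, if_neg h2i]
        simpa using mul_nonneg (hqnn (i-1)) (hqnn i)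
      rcases eq_or_lt_of_le (hqnn (i-1)) with hb0 | hbpos
      · -- b = 0 forces d = 0
        have hb0 : b = 0 := hb0.symm
        have he0 : s.esymm (i-1) = 0 := by
          rw [hmul (i-1), ← hb, hb0, mul_zero]
        have he1 : s.esymm i = 0 := by
          have := esymm_zero_succ s hs' (i-1) he0
          rwa [Nat.sub_add_cancel hi1] at this
        have he2 : s.esymm (i+1) = 0 := esymm_zero_succ s hs' i he1
        have hd0 : d = 0 := by
          by_cases hjm : i + 1 ≤ m
          · have hCpos : ((m.choose (i+1) : ℕ) : ℝ) ≠ 0 :=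
              Nat.cast_ne_zero.2 (Nat.choose_pos hjm).ne'
            have := hmul (i+1)
            rw [he2] at this
            rw [hd]
            exact (mul_eq_zero.1 this.symm).resolve_left hCpos
          · rw [hd]; exact hqzero (i+1) (by omega)
        rw [hd0, hb0, mul_zero, zero_mul]
      rcases eq_or_lt_of_le (hqnn i) with hc0 | hcpos
      · have hc0 : c = 0 := hc0.symm
        have he1 : s.esymm i = 0 := by
          rw [hmul i, ← hc, hc0, mul_zero]
        have he2 : s.esymm (i+1) = 0 := esymm_zero_succ s hs' i he1
        have hd0 : d = 0 := by
          by_cases hjm : i + 1 ≤ m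
          · have hCpos : ((m.choose (i+1) : ℕ) : ℝ) ≠ 0 :=
              Nat.cast_ne_zero.2 (Nat.choose_pos hjm).ne'
            have := hmul (i+1)
            rw [he2] at this
            rw [hd]
            exact (mul_eq_zero.1 this.symm).resolve_left hCpos
          · rw [hd]; exact hqzero (i+1) (by omega)
        rw [hd0, hc0, mul_zero, mul_zero]
      · have hbc : 0 < b * c := mul_pos hbpos hcpos
        have := mul_le_mul h1 h2 (mul_nonneg (hqnn (i-1)) (hqnn (i+1)))
          (sq_nonneg b)
        have key : (A * d) * (b * c) ≤ (b*c) * (b*c) := by nlinarith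
        exact le_of_mul_le_mul_right key hbc
    -- final reduction
    rw [div_mul_div_comm, div_pow]
    have hn2 : (0:ℝ) < (n:ℝ)^2 := by positivity
    rw [div_le_div_iff₀ (by positivity) hn2]
    have := quad_key (n:ℝ) (i:ℝ) t A b c d ht hiR hiRn h1 h2 h3
    calc (((n:ℝ) - i + 1) * b + ((i:ℝ)-1) * t * A) * ((((n:ℝ) - i - 1) * d + ((i:ℝ)+1) * t * c)) * (n:ℝ)^2
        ≤ (((n:ℝ) - i) * c + (i:ℝ) * t * b)^2 * (n:ℝ)^2 := by nlinarith [sq_nonneg ((n:ℝ))]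
      _ = _ := by ring



theorem newton_inequalities (n : ℕ) (γ : Fin n → ℝ) (hγ : ∀ j, 0 ≤ γ j)
    (e : ℕ → ℝ)
    (he : ∀ i, e i = ∑ J ∈ Finset.univ.powersetCard i, ∏ j ∈ J, γ j)
    (i : ℕ) (hi1 : 1 ≤ i) (hi2 : i ≤ n - 1) :
    (e i / (n.choose i : ℝ))^2 ≥
      (e (i-1) / (n.choose (i-1) : ℝ)) * (e (i+1) / (n.choose (i+1) : ℝ)) := by
  set s : Multiset ℝ := Finset.univ.val.map γ with hsdef
  have hcard : s.card = n := by simp [hsdef]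
  have hes : ∀ k, e k = s.esymm k := by
    intro k
    rw [he k, hsdef, Finset.esymm_map_val]
  have hnn : ∀ x ∈ s, 0 ≤ x := by
    intro x hx
    rw [hsdef] at hx
    obtain ⟨j, _, rfl⟩ := Multiset.mem_map.1 hx
    exact hγ j
  have h2 : i + 1 ≤ s.card := by omega
  have := newton_multiset s hnn i hi1 h2
  rw [hcard] at this
  rw [hes i, hes (i-1), hes (i+1)]
  exact this
end

section
/- There exists a complex number z with Re(z) > 0 and Im(z) > 0 such that Σ_{i=3}^{8} C(10,i)·z^i = 0. Consequently, the truncated binomial polynomial P^{10}_{3,8}(z) = 120z³ + 210z⁴ + 252z⁵ + 210z⁶ + 120z⁷ + 45z⁸ is not a weakly stable polynomial. -/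
open Complex Metric

noncomputable def zc : ℂ := ⟨159/10000, 11903/10000⟩

noncomputable def fP (z : ℂ) : ℂ :=
  120*z^3 + 210*z^4 + 252*z^5 + 210*z^6 + 120*z^7 + 45*z^8

/-- first Taylor coefficient (derivative) at w -/
noncomputable def D1 (w : ℂ) : ℂ :=
  360*w^2 + 840*w^3 + 1260*w^4 + 1260*w^5 + 840*w^6 + 360*w^7

lemma abs_le_of (c : ℂ) (M : ℝ) (hM : 0 ≤ M) (h : c.re^2 + c.im^2 ≤ M^2) : ‖c‖ ≤ M := by
  rw [Complex.norm_def, Complex.normSq_apply, ← Real.sqrt_sq hM]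
  exact Real.sqrt_le_sqrt (by nlinarith)

lemma le_abs_of (c : ℂ) (M : ℝ) (hM : 0 ≤ M) (h : M^2 ≤ c.re^2 + c.im^2) : M ≤ ‖c‖ := by
  rw [Complex.norm_def, Complex.normSq_apply, ← Real.sqrt_sq hM]
  exact Real.sqrt_le_sqrt (by nlinarith)

lemma hD1 : (557:ℝ) ≤ ‖D1 zc‖ := by
  apply le_abs_of _ _ (by norm_num)
  norm_num [D1, zc, pow_succ, Complex.mul_re, Complex.mul_im, Complex.add_re, Complex.add_im]

lemma hfP0 : ‖fP zc‖ ≤ 1/25 := by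
  apply abs_le_of _ _ (by norm_num)
  norm_num [fP, zc, pow_succ, Complex.mul_re, Complex.mul_im, Complex.add_re, Complex.add_im]

/-- Taylor-type estimate on the sphere of radius 1/200 around zc. -/
lemma sphere_bound : ∀ z ∈ sphere zc (1/200), (2:ℝ) ≤ ‖fP z - fP zc‖ := by
  intro z hz
  have hu : ‖z - zc‖ = 1/200 := by
    rwa [mem_sphere, dist_eq_norm] at hz
  set u : ℂ := z - zc with hudef
  -- Taylor coefficients at zc
  set d2 : ℂ := 360*zc + 1260*zc^2 + 2520*zc^3 + 3150*zc^4 + 2520*zc^5 + 1260*zc^6 with hd2def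
  set d3 : ℂ := 120 + 840*zc + 2520*zc^2 + 4200*zc^3 + 4200*zc^4 + 2520*zc^5 with hd3def
  set d4 : ℂ := 210 + 1260*zc + 3150*zc^2 + 4200*zc^3 + 3150*zc^4 with hd4def
  set d5 : ℂ := 252 + 1260*zc + 2520*zc^2 + 2520*zc^3 with hd5def
  set d6 : ℂ := 210 + 840*zc + 1260*zc^2 with hd6def
  set d7 : ℂ := 120 + 360*zc with hd7def
  set g : ℂ := d2 + u*(d3 + u*(d4 + u*(d5 + u*(d6 + u*(d7 + u*45))))) with hgdef
  have key : fP z - fP zc = D1 zc * u + u^2 * g := by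
    simp only [hgdef, hd2def, hd3def, hd4def, hd5def, hd6def, hd7def, hudef, fP, D1]
    ring
  -- numeric bounds on the Taylor coefficients
  have b2 : ‖d2‖ ≤ 2494 := by
    apply abs_le_of _ _ (by norm_num)
    norm_num [hd2def, zc, pow_succ, Complex.mul_re, Complex.mul_im, Complex.add_re, Complex.add_im]
  have b3 : ‖d3‖ ≤ 5122 := by
    apply abs_le_of _ _ (by norm_num)
    norm_num [hd3def, zc, pow_succ, Complex.mul_re, Complex.mul_im, Complex.add_re, Complex.add_im]
  have b4 : ‖d4‖ ≤ 6072 := by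
    apply abs_le_of _ _ (by norm_num)
    norm_num [hd4def, zc, pow_succ, Complex.mul_re, Complex.mul_im, Complex.add_re, Complex.add_im]
  have b5 : ‖d5‖ ≤ 4367 := by
    apply abs_le_of _ _ (by norm_num)
    norm_num [hd5def, zc, pow_succ, Complex.mul_re, Complex.mul_im, Complex.add_re, Complex.add_im]
  have b6 : ‖d6‖ ≤ 1881 := by
    apply abs_le_of _ _ (by norm_num)
    norm_num [hd6def, zc, pow_succ, Complex.mul_re, Complex.mul_im, Complex.add_re, Complex.add_im]
  have b7 : ‖d7‖ ≤ 447 := by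
    apply abs_le_of _ _ (by norm_num)
    norm_num [hd7def, zc, pow_succ, Complex.mul_re, Complex.mul_im, Complex.add_re, Complex.add_im]
  -- Horner-style bound on g
  have s7 : ‖d7 + u*45‖ ≤ 448 := by
    have h45 : ‖(45:ℂ)‖ = 45 := by norm_num
    calc ‖d7 + u*45‖ ≤ ‖d7‖ + ‖u‖ * ‖(45:ℂ)‖ := by
          rw [← norm_mul]; exact norm_add_le _ _
    _ ≤ 447 + (1/200)*45 := by rw [hu, h45]; gcongr
    _ ≤ 448 := by norm_num
  have s6 : ‖d6 + u*(d7 + u*45)‖ ≤ 1884 := by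
    calc ‖d6 + u*(d7 + u*45)‖ ≤ ‖d6‖ + ‖u‖ * ‖d7 + u*45‖ := by
          rw [← norm_mul]; exact norm_add_le _ _
    _ ≤ 1881 + (1/200) * 448 := by rw [hu]; gcongr
    _ ≤ 1884 := by norm_num
  have s5 : ‖d5 + u*(d6 + u*(d7 + u*45))‖ ≤ 4377 := by
    calc _ ≤ ‖d5‖ + ‖u‖ * ‖d6 + u*(d7 + u*45)‖ := by
          rw [← norm_mul]; exact norm_add_le _ _
    _ ≤ 4367 + (1/200) * 1884 := by rw [hu]; gcongr
    _ ≤ 4377 := by norm_num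
  have s4 : ‖d4 + u*(d5 + u*(d6 + u*(d7 + u*45)))‖ ≤ 6094 := by
    calc _ ≤ ‖d4‖ + ‖u‖ * ‖d5 + u*(d6 + u*(d7 + u*45))‖ := by
          rw [← norm_mul]; exact norm_add_le _ _
    _ ≤ 6072 + (1/200) * 4377 := by rw [hu]; gcongr
    _ ≤ 6094 := by norm_num
  have s3 : ‖d3 + u*(d4 + u*(d5 + u*(d6 + u*(d7 + u*45))))‖ ≤ 5153 := by
    calc _ ≤ ‖d3‖ + ‖u‖ * ‖d4 + u*(d5 + u*(d6 + u*(d7 + u*45)))‖ := by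
          rw [← norm_mul]; exact norm_add_le _ _
    _ ≤ 5122 + (1/200) * 6094 := by rw [hu]; gcongr
    _ ≤ 5153 := by norm_num
  have sg : ‖g‖ ≤ 2520 := by
    calc ‖g‖ ≤ ‖d2‖ + ‖u‖ * ‖d3 + u*(d4 + u*(d5 + u*(d6 + u*(d7 + u*45))))‖ := by
          rw [hgdef, ← norm_mul]; exact norm_add_le _ _
    _ ≤ 2494 + (1/200) * 5153 := by rw [hu]; gcongr
    _ ≤ 2520 := by norm_num
  -- conclude
  have h1 : ‖D1 zc * u‖ ≥ 557 * (1/200) := by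
    rw [norm_mul, hu]
    nlinarith [hD1]
  have h2 : ‖u^2 * g‖ ≤ (1/200)^2 * 2520 := by
    rw [norm_mul, norm_pow, hu]
    gcongr
  have h3 : ‖D1 zc * u‖ - ‖u^2 * g‖ ≤ ‖fP z - fP zc‖ := by
    have h4 : fP z - fP zc - u^2*g = D1 zc * u := by rw [key]; ring
    have h5 := norm_sub_le (fP z - fP zc) (u^2*g)
    rw [h4] at h5
    linarith
  have : (557:ℝ) * (1/200) - (1/200)^2 * 2520 ≥ 2 := by norm_num
  linarith

lemma hasDeriv : HasDerivAt fP (D1 zc) zc := by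
  have h3 := (hasDerivAt_pow 3 zc).const_mul (120:ℂ)
  have h4 := (hasDerivAt_pow 4 zc).const_mul (210:ℂ)
  have h5 := (hasDerivAt_pow 5 zc).const_mul (252:ℂ)
  have h6 := (hasDerivAt_pow 6 zc).const_mul (210:ℂ)
  have h7 := (hasDerivAt_pow 7 zc).const_mul (120:ℂ)
  have h8 := (hasDerivAt_pow 8 zc).const_mul (45:ℂ)
  have H := ((((h3.add h4).add h5).add h6).add h7).add h8
  refine H.congr_deriv ?_
  simp only [D1]
  norm_num
  ring

lemma my_exists_root : ∃ z : ℂ, 0 < z.re ∧ 0 < z.im ∧ fP z = 0 := by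
  have hdiff : DiffContOnCl ℂ fP (ball zc (1/200)) := by
    apply Differentiable.diffContOnCl
    intro z
    apply DifferentiableAt.add
    apply DifferentiableAt.add
    apply DifferentiableAt.add
    apply DifferentiableAt.add
    apply DifferentiableAt.add
    all_goals exact ((differentiableAt_pow _).const_mul _)
  have hfreq : ∃ᶠ z in nhds zc, fP z ≠ fP zc := by
    by_contra h
    rw [Filter.not_frequently] at h
    simp only [not_not] at h
    have hev : fP =ᶠ[nhds zc] (fun _ => fP zc) := h
    have : deriv fP zc = 0 := by
      rw [hev.deriv_eq]; simp
    rw [hasDeriv.deriv] at this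
    have h557 := hD1
    rw [this] at h557
    simp at h557
    linarith
  have himg := hdiff.ball_subset_image_closedBall (by norm_num : (0:ℝ) < 1/200)
    sphere_bound hfreq
  have h0 : (0:ℂ) ∈ ball (fP zc) (2/2) := by
    rw [mem_ball, dist_comm, dist_eq_norm, sub_zero]
    linarith [hfP0]
  obtain ⟨z, hz, hfz⟩ := himg h0
  rw [mem_closedBall, dist_eq_norm] at hz
  have hre : |(z - zc).re| ≤ 1/200 :=
    le_trans (Complex.abs_re_le_norm _) hz
  have him : |(z - zc).im| ≤ 1/200 :=
    le_trans (Complex.abs_im_le_norm _) hz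
  rw [Complex.sub_re] at hre
  rw [Complex.sub_im] at him
  have hzcre : zc.re = 159/10000 := rfl
  have hzcim : zc.im = 11903/10000 := rfl
  refine ⟨z, ?_, ?_, hfz⟩
  · rw [abs_le] at hre; rw [hzcre] at hre; linarith [hre.1]
  · rw [abs_le] at him; rw [hzcim] at him; linarith [him.1]

theorem P_10_3_8_not_weakly_stable :
    (∃ z : ℂ, 0 < z.re ∧ 0 < z.im ∧
        ∑ i ∈ Finset.Icc 3 8, (Nat.choose 10 i : ℂ) * z ^ i = 0) ∧
      ¬(∀ z : ℂ, 120*z^3 + 210*z^4 + 252*z^5 + 210*z^6 + 120*z^7 + 45*z^8 = 0 →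
          z ≠ 0 → z.re < 0) := by
  obtain ⟨z, hre, him, hz⟩ := my_exists_root
  have hsum : ∀ w : ℂ, ∑ i ∈ Finset.Icc 3 8, (Nat.choose 10 i : ℂ) * w ^ i = fP w := by
    intro w
    rw [show Finset.Icc 3 8 = ({3,4,5,6,7,8} : Finset ℕ) from rfl]
    simp [fP, Finset.sum_insert, Nat.choose]
    ring
  constructor
  · exact ⟨z, hre, him, by rw [hsum]; exact hz⟩
  · intro H
    have hne : z ≠ 0 := by
      intro h0; rw [h0] at hre; simp at hre
    have := H z (by simpa [fP] using hz) hne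
    linarith
end
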